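/- In a Euclidean Jordan algebra, let x and y be elements of the cone of squares K = {z∘z : z}. Then x∘y = 0 if and only if ⟨x, y⟩ = 0. -/

import Mathlib

/-- A Euclidean Jordan algebra structure on a finite-dimensional real inner ℝ product
space `E`: a commutative bilinear product satisfying the Jordan identity, compatible with
the inner ℝ product, and possessing an identity element. -/
structure EuclideanJordanAlgebra (E : Type*) [NormedAddCommGroup E]
    [InnerProductSpace ℝ E] [FiniteDimensional ℝ E] where
  /-- the Jordan product -/
  mul : E → E → E
  mul_comm : ∀ x y, mul x y = mul y x
  mul_add : ∀ x y z, mul x (y + z) = mul x y + mul x z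
  mul_smul : ∀ (c : ℝ) (x y : E), mul x (c • y) = c • mul x y
  jordan : ∀ x y, mul x (mul (mul x x) y) = mul (mul x x) (mul x y)
  inner_assoc : ∀ x y z, (inner ℝ (mul x y) z : ℝ) = inner ℝ y (mul x z)
  one : E
  one_mul : ∀ x, mul one x = x

namespace EuclideanJordanAlgebra

variable {E : Type*} [NormedAddCommGroup E] [InnerProductSpace ℝ E]
  [FiniteDimensional ℝ E] (J : EuclideanJordanAlgebra E)

lemma add_mul' (x y z : E) : J.mul (x + y) z = J.mul x z + J.mul y z := by
  rw [J.mul_comm, J.mul_add, J.mul_comm z x, J.mul_comm z y]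

lemma smul_mul' (c : ℝ) (x y : E) : J.mul (c • x) y = c • J.mul x y := by
  rw [J.mul_comm, J.mul_smul, J.mul_comm]

lemma mul_one' (x : E) : J.mul x J.one = x := by rw [J.mul_comm, J.one_mul]

lemma mul_neg' (x y : E) : J.mul x (-y) = -J.mul x y := by
  rw [← neg_one_smul ℝ y, J.mul_smul, neg_one_smul]

lemma neg_mul' (x y : E) : J.mul (-x) y = -J.mul x y := by
  rw [J.mul_comm, J.mul_neg', J.mul_comm]

lemma mul_sub' (x y z : E) : J.mul x (y - z) = J.mul x y - J.mul x z := by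
  rw [sub_eq_add_neg, J.mul_add, J.mul_neg', sub_eq_add_neg]

lemma sub_mul' (x y z : E) : J.mul (x - y) z = J.mul x z - J.mul y z := by
  rw [J.mul_comm, J.mul_sub', J.mul_comm z x, J.mul_comm z y]

/-- linearized Jordan identity -/
lemma J2 (x z y : E) :
    J.mul z (J.mul (J.mul x x) y) + (2:ℝ) • J.mul x (J.mul (J.mul x z) y)
      = J.mul (J.mul x x) (J.mul z y) + (2:ℝ) • J.mul (J.mul x z) (J.mul x y) := by
  have h1 := J.jordan (x + z) y
  have h2 := J.jordan (x - z) y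
  have h3 := J.jordan z y
  simp only [J.mul_add, J.add_mul', J.mul_sub', J.sub_mul', J.mul_comm z x] at h1 h2
  linear_combination (norm := module) (2:ℝ)⁻¹ • h1 - (2:ℝ)⁻¹ • h2 - h3

/-- Jordan multiplication operator as a linear map. -/
def L (a : E) : E →ₗ[ℝ] E where
  toFun := J.mul a
  map_add' := J.mul_add a
  map_smul' c y := J.mul_smul c a y

@[simp] lemma L_apply (a y : E) : J.L a y = J.mul a y := rfl

lemma L_symm (a : E) : (J.L a).IsSymmetric := fun x y => by
  simp [J.inner_assoc]

/-- powers of an element -/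
noncomputable def pw (x : E) (k : ℕ) : E := ((J.L x) ^ k) J.one

@[simp] lemma pw_zero (x : E) : J.pw x 0 = J.one := rfl

lemma pw_succ (x : E) (k : ℕ) : J.pw x (k + 1) = J.mul x (J.pw x k) := by
  simp [pw, pow_succ']

@[simp] lemma pw_one (x : E) : J.pw x 1 = x := by simp [pw_succ, J.mul_one']

lemma add_two_smul_cancel {a b : E} (h : a + (2:ℝ) • a = b + (2:ℝ) • b) : a = b := by
  have h3 : (3:ℝ) • a = (3:ℝ) • b := by linear_combination (norm := module) h
  exact smul_right_injective E (by norm_num) h3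

/-- the key instance of the linearized Jordan identity, for powers -/
lemma J2pw (x : E) (p q : ℕ) :
    J.mul (J.pw x p) (J.mul (J.mul x x) (J.pw x q))
      + (2:ℝ) • J.mul x (J.mul (J.pw x (p+1)) (J.pw x q))
    = J.mul (J.mul x x) (J.mul (J.pw x p) (J.pw x q))
      + (2:ℝ) • J.mul (J.pw x (p+1)) (J.pw x (q+1)) := by
  have := J.J2 x (J.pw x p) (J.pw x q)
  rwa [← J.pw_succ x p, ← J.pw_succ x q] at this

lemma pw_two_mul (x : E) : ∀ q, J.mul (J.mul x x) (J.pw x q) = J.pw x (q + 2) := by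
  intro q
  induction q with
  | zero => simp [J.mul_one', pw_succ, J.mul_comm]
  | succ q ih =>
      have h := J.J2pw x 1 q
      have hpw2 : J.pw x (1+1) = J.mul x x := by rw [J.pw_succ, J.pw_one]
      rw [J.pw_one, hpw2, ih, ← J.pw_succ x (q+2), ← J.pw_succ x q] at h
      -- h : pw (q+2+1) + 2 • pw (q+2+1) = x² ∘ pw (q+1) + 2 • x² ∘ pw (q+1)
      have := (add_two_smul_cancel h).symm
      rwa [show q + 1 + 2 = q + 2 + 1 from by omega]

/-- power associativity -/
lemma pw_mul (x : E) : ∀ p q, J.mul (J.pw x p) (J.pw x q) = J.pw x (p + q) := by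
  suffices h : ∀ p, (∀ q, J.mul (J.pw x p) (J.pw x q) = J.pw x (p + q)) ∧
      (∀ q, J.mul (J.pw x (p+1)) (J.pw x q) = J.pw x (p + 1 + q)) by
    intro p q; exact (h p).1 q
  intro p
  induction p with
  | zero =>
      constructor
      · intro q; simp [J.one_mul]
      · intro q
        simp only [Nat.zero_add, J.pw_one, ← J.pw_succ, Nat.add_comm 1 q]
  | succ p ih =>
      refine ⟨ih.2, ?_⟩
      intro q
      induction q with
      | zero => simp [J.mul_one']
      | succ q ihq =>
          have h := J.J2pw x (p+1) q
          rw [J.pw_two_mul] at h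
          rw [ih.2 (q+2), ihq, ← J.pw_succ x (p+1+1+q), ih.2 q, J.pw_two_mul] at h
          rw [show p+1+(q+2) = p+1+1+q+1 from by omega,
              show p+1+q+2 = p+1+1+q+1 from by omega] at h
          have h2 := add_left_cancel h
          have h3 := smul_right_injective E (two_ne_zero (α := ℝ)) h2
          rw [← h3, show p+1+1+(q+1) = p+1+1+q+1 from by omega]


open Polynomial in
/-- polynomial functional calculus applied to the identity -/
noncomputable def phi (x : E) (p : Polynomial ℝ) : E := (Polynomial.aeval (J.L x) p) J.one

open Polynomial in
lemma phi_monomial (x : E) (n : ℕ) (a : ℝ) :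
    J.phi x (Polynomial.monomial n a) = a • J.pw x n := by
  simp [phi, pw, Polynomial.aeval_monomial, Algebra.smul_def, Module.End.mul_apply]

open Polynomial in
lemma phi_add (x : E) (p q : Polynomial ℝ) :
    J.phi x (p + q) = J.phi x p + J.phi x q := by
  simp [phi]

open Polynomial in
lemma phi_mul (x : E) (p q : Polynomial ℝ) :
    J.mul (J.phi x p) (J.phi x q) = J.phi x (p * q) := by
  induction p using Polynomial.induction_on' with
  | add p p' hp hp' =>
      rw [J.phi_add, J.add_mul', hp, hp', add_mul, J.phi_add]
  | monomial n a =>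
      induction q using Polynomial.induction_on' with
      | add q q' hq hq' =>
          rw [J.phi_add, J.mul_add, hq, hq', _root_.mul_add, J.phi_add]
      | monomial m b =>
          rw [J.phi_monomial, J.phi_monomial, J.smul_mul', J.mul_smul, J.pw_mul,
            Polynomial.monomial_mul_monomial, J.phi_monomial, smul_smul]

open Polynomial in
lemma pow_eigen (x v : E) (μ : ℝ) (h : J.mul x v = μ • v) (n : ℕ) :
    ((J.L x) ^ n) v = μ ^ n • v := by
  induction n with
  | zero => simp
  | succ n ih =>
      rw [pow_succ', Module.End.mul_apply, ih, LinearMap.map_smul, L_apply, h,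
        smul_smul, ← pow_succ]

open Polynomial in
lemma aeval_eigen (x v : E) (μ : ℝ) (h : J.mul x v = μ • v) (p : Polynomial ℝ) :
    (Polynomial.aeval (J.L x) p) v = p.eval μ • v := by
  induction p using Polynomial.induction_on' with
  | add p q hp hq => simp [hp, hq, add_smul]
  | monomial n a =>
      simp [Polynomial.aeval_monomial, Algebra.smul_def, Module.End.mul_apply,
        J.pow_eigen x v μ h n, smul_smul]
      rw [_root_.mul_comm (μ ^ n) a]


lemma idem_eig_nonneg (c u : E) (ν : ℝ) (hc : J.mul c c = c)
    (hu : J.mul c u = ν • u) (hne : u ≠ 0) : 0 ≤ ν := by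
  by_contra hlt
  push_neg at hlt
  have hE1 : ∀ y, J.mul c (J.mul u y) = J.mul u (J.mul c y) := by
    intro y
    have h := J.J2 c u y
    simp only [hc, hu, J.smul_mul', J.mul_smul] at h
    have key : (2*ν-1) • J.mul c (J.mul u y) = (2*ν-1) • J.mul u (J.mul c y) := by
      linear_combination (norm := module) h
    have hne2 : (2*ν-1) ≠ 0 := by nlinarith
    exact smul_right_injective E hne2 key
  have hE2 : ∀ y, J.mul c (J.mul (J.mul u u) y) = J.mul (J.mul u u) (J.mul c y) := by
    intro y
    have h := J.J2 u c y
    simp only [J.mul_comm u c, hu, J.smul_mul', J.mul_smul] at h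
    linear_combination (norm := module) h
  have E4 : J.mul c (J.mul u u) = ν • J.mul u u := by
    have h := hE1 u
    rwa [hu, J.mul_smul] at h
  have E3 : J.mul c (J.mul (J.mul u u) c) = J.mul (J.mul u u) c := by
    have h := hE2 c
    rwa [hc] at h
  have E5 : J.mul (J.mul u u) c = ν • J.mul u u := by rw [J.mul_comm, E4]
  rw [E5, J.mul_smul, E4, smul_smul] at E3
  have husq : J.mul u u = 0 := by
    have h0 : (ν*ν - ν) • J.mul u u = 0 := by
      rw [sub_smul, E3, sub_self]
    have hne3 : ν*ν - ν ≠ 0 := by nlinarith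
    exact (smul_eq_zero.mp h0).resolve_left hne3
  have hz : (inner ℝ u u : ℝ) = 0 := by
    have h := J.inner_assoc u u J.one
    rw [J.mul_one', husq] at h
    simpa using h.symm
  exact hne (inner_self_eq_zero.mp hz)

lemma idem_L_nonneg (c : E) (hc : J.mul c c = c) (w : E) :
    0 ≤ (inner ℝ (J.mul c w) w : ℝ) := by
  have hT : (J.L c).IsSymmetric := J.L_symm c
  have hn : Module.finrank ℝ E = Module.finrank ℝ E := rfl
  set B := hT.eigenvectorBasis hn with hBdef
  have hB : ∀ i, J.mul c (B i) = hT.eigenvalues hn i • B i := by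
    intro i
    have h := hT.apply_eigenvectorBasis hn i
    rw [RCLike.real_smul_eq_coe_smul (K := ℝ)]
    exact h
  have hnn : ∀ i, 0 ≤ hT.eigenvalues hn i := fun i =>
    J.idem_eig_nonneg c (B i) _ hc (hB i) (by simpa using B.toBasis.ne_zero i)
  have hcalc : (inner ℝ (J.mul c w) w : ℝ)
      = ∑ i, hT.eigenvalues hn i * ((inner ℝ (B i) w : ℝ) * (inner ℝ (B i) w : ℝ)) := by
    rw [← B.sum_inner_mul_inner (J.mul c w) w]
    refine Finset.sum_congr rfl fun i _ => ?_
    have h1 : (inner ℝ (J.mul c w) (B i) : ℝ) = inner ℝ w (J.mul c (B i)) := hT w (B i)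
    rw [h1, hB i, real_inner_smul_right, real_inner_comm w (B i)]
    ring
  rw [hcalc]
  exact Finset.sum_nonneg fun i _ =>
    mul_nonneg (hnn i) (mul_self_nonneg _)


open Polynomial in
lemma phi_sub (x : E) (p q : Polynomial ℝ) :
    J.phi x (p - q) = J.phi x p - J.phi x q := by
  simp [phi]

open Polynomial in
lemma phi_Cmul (x : E) (a : ℝ) (p : Polynomial ℝ) :
    J.phi x (Polynomial.C a * p) = a • J.phi x p := by
  simp [phi, Algebra.smul_def]

open Polynomial in
lemma phi_X (x : E) : J.phi x Polynomial.X = x := by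
  simp [phi, J.mul_one']

open Polynomial in
lemma phi_sum (x : E) {ι : Type*} (t : Finset ι) (f : ι → Polynomial ℝ) :
    J.phi x (∑ μ ∈ t, f μ) = ∑ μ ∈ t, J.phi x (f μ) := by
  simp [phi, map_sum, LinearMap.sum_apply]

lemma sq_inner_nonneg (x w : E) : 0 ≤ (inner ℝ (J.mul x x) (J.mul w w) : ℝ) := by
  have hT : (J.L x).IsSymmetric := J.L_symm x
  have hn : Module.finrank ℝ E = Module.finrank ℝ E := rfl
  set B := hT.eigenvectorBasis hn with hBdef
  set ν := hT.eigenvalues hn with hνdef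
  have hB : ∀ i, J.mul x (B i) = ν i • B i := by
    intro i
    have h := hT.apply_eigenvectorBasis hn i
    rw [RCLike.real_smul_eq_coe_smul (K := ℝ)]
    exact h
  set s : Finset ℝ := Finset.image ν Finset.univ with hs
  have hinj : Set.InjOn id (s : Set ℝ) := Function.injective_id.injOn
  have vanish : ∀ p : Polynomial ℝ, (∀ i, p.eval (ν i) = 0) → J.phi x p = 0 := by
    intro p hp
    show (Polynomial.aeval (J.L x) p) J.one = 0
    rw [← B.sum_repr J.one, map_sum]
    refine Finset.sum_eq_zero fun i _ => ?_
    rw [map_smul, J.aeval_eigen x (B i) (ν i) (hB i), hp i, zero_smul, smul_zero]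
  have heval01 : ∀ μ ∈ s, ∀ i : Fin (Module.finrank ℝ E),
      (Lagrange.basis s id μ).eval (ν i) = if μ = ν i then 1 else 0 := by
    intro μ hμ i
    have hmem : ν i ∈ s := Finset.mem_image_of_mem ν (Finset.mem_univ i)
    by_cases hcase : μ = ν i
    · subst hcase
      simpa using Lagrange.eval_basis_self (v := id) hinj hμ
    · simpa [hcase] using Lagrange.eval_basis_of_ne (v := id) hcase hmem
  have hidem : ∀ μ ∈ s, J.mul (J.phi x (Lagrange.basis s id μ))
      (J.phi x (Lagrange.basis s id μ)) = J.phi x (Lagrange.basis s id μ) := by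
    intro μ hμ
    rw [J.phi_mul]
    have h0 : J.phi x (Lagrange.basis s id μ * Lagrange.basis s id μ
        - Lagrange.basis s id μ) = 0 := by
      refine vanish _ fun i => ?_
      rw [Polynomial.eval_sub, Polynomial.eval_mul, heval01 μ hμ i]
      by_cases hcase : μ = ν i <;> simp [hcase]
    rw [J.phi_sub] at h0
    exact sub_eq_zero.mp h0
  have hx2 : J.mul x x = ∑ μ ∈ s, (μ*μ) • J.phi x (Lagrange.basis s id μ) := by
    have h1 : J.mul x x = J.phi x (Polynomial.X * Polynomial.X) := by
      rw [← J.phi_mul, J.phi_X]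
    have h0 : J.phi x (Polynomial.X * Polynomial.X
        - ∑ μ ∈ s, Polynomial.C (μ*μ) * Lagrange.basis s id μ) = 0 := by
      refine vanish _ fun i => ?_
      have hmem : ν i ∈ s := Finset.mem_image_of_mem ν (Finset.mem_univ i)
      rw [Polynomial.eval_sub, Polynomial.eval_mul, Polynomial.eval_X,
        Polynomial.eval_finset_sum]
      rw [Finset.sum_eq_single (ν i)]
      · rw [Polynomial.eval_mul, Polynomial.eval_C, heval01 (ν i) hmem i]
        simp
      · intro μ hμ hne
        rw [Polynomial.eval_mul, Polynomial.eval_C, heval01 μ hμ i, if_neg hne, mul_zero]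
      · intro hnot
        exact absurd hmem hnot
    rw [J.phi_sub, sub_eq_zero] at h0
    rw [h1, h0, J.phi_sum]
    exact Finset.sum_congr rfl fun μ _ => J.phi_Cmul x (μ*μ) _
  rw [hx2, sum_inner]
  refine Finset.sum_nonneg fun μ hμ => ?_
  rw [real_inner_smul_left]
  refine mul_nonneg (mul_self_nonneg μ) ?_
  rw [← J.inner_assoc w _ w, J.mul_comm w _]
  exact J.idem_L_nonneg _ (hidem μ hμ) w


lemma psd_kernel (x v : E) (hpsd : ∀ w, 0 ≤ (inner ℝ (J.mul x w) w : ℝ))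
    (hv : (inner ℝ (J.mul x v) v : ℝ) = 0) : J.mul x v = 0 := by
  have hsym : (inner ℝ (J.mul x (J.mul x v)) v : ℝ)
      = inner ℝ (J.mul x v) (J.mul x v) := J.inner_assoc x (J.mul x v) v
  have key : ∀ t : ℝ, 0 ≤ t * t * (inner ℝ (J.mul x (J.mul x v)) (J.mul x v) : ℝ)
      + 2 * t * (inner ℝ (J.mul x v) (J.mul x v) : ℝ) := by
    intro t
    have h := hpsd (v + t • J.mul x v)
    rw [J.mul_add, J.mul_smul] at h
    simp only [inner_add_left, inner_add_right, real_inner_smul_left,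
      real_inner_smul_right] at h
    rw [hv, hsym] at h
    linarith
  set a : ℝ := inner ℝ (J.mul x (J.mul x v)) (J.mul x v) with ha_def
  set g : ℝ := inner ℝ (J.mul x v) (J.mul x v) with hg_def
  have ha : 0 ≤ a := hpsd (J.mul x v)
  have hg : 0 ≤ g := real_inner_self_nonneg
  have hg0 : g = 0 := by
    by_contra hne
    have hgpos : 0 < g := lt_of_le_of_ne hg (Ne.symm hne)
    have ha1 : (0:ℝ) < a + 1 := by linarith
    have h := key (-(g/(a+1)))
    have e : (a+1)^2 * ((-(g/(a+1))) * (-(g/(a+1))) * a + 2 * (-(g/(a+1))) * g)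
        = g*g*a - 2*(g*g)*(a+1) := by
      field_simp
      ring
    nlinarith [mul_nonneg (sq_nonneg (a+1)) h]
  exact inner_self_eq_zero.mp hg0

end EuclideanJordanAlgebra

/-- The cone of squares of a Euclidean Jordan algebra. -/
def EuclideanJordanAlgebra.coneOfSquares {E : Type*} [NormedAddCommGroup E]
    [InnerProductSpace ℝ E] [FiniteDimensional ℝ E] (J : EuclideanJordanAlgebra E) : Set E :=
  {x | ∃ z : E, x = J.mul z z}

/-- An idempotent of a Euclidean Jordan algebra. -/
def EuclideanJordanAlgebra.IsIdempotent {E : Type*} [NormedAddCommGroup E]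
    [InnerProductSpace ℝ E] [FiniteDimensional ℝ E] (J : EuclideanJordanAlgebra E)
    (c : E) : Prop :=
  J.mul c c = c

/-- A primitive idempotent: a nonzero idempotent which is not the sum of two nonzero
orthogonal idempotents. -/
def EuclideanJordanAlgebra.IsPrimitiveIdempotent {E : Type*} [NormedAddCommGroup E]
    [InnerProductSpace ℝ E] [FiniteDimensional ℝ E] (J : EuclideanJordanAlgebra E)
    (c : E) : Prop :=
  J.IsIdempotent c ∧ c ≠ 0 ∧
    ¬∃ a b : E, a ≠ 0 ∧ b ≠ 0 ∧ J.IsIdempotent a ∧ J.IsIdempotent b ∧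
      J.mul a b = 0 ∧ c = a + b

/-- In a Euclidean Jordan algebra, for `x, y` in the cone of squares,
`x ∘ y = 0` iff `⟪x, y⟫ = 0`. -/
theorem caratheodory_stmt17 {E : Type*} [NormedAddCommGroup E]
    [InnerProductSpace ℝ E] [FiniteDimensional ℝ E] (J : EuclideanJordanAlgebra E)
    (x y : E) (hx : x ∈ J.coneOfSquares) (hy : y ∈ J.coneOfSquares) :
    J.mul x y = 0 ↔ (inner ℝ x y : ℝ) = 0 := by
  obtain ⟨u, rfl⟩ := hx
  obtain ⟨v, rfl⟩ := hy
  constructor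
  · intro h
    have h2 := J.inner_assoc (J.mul u u) J.one (J.mul v v)
    rw [J.mul_one', h] at h2
    simpa using h2
  · intro h
    have hpsd : ∀ w, 0 ≤ (inner ℝ (J.mul (J.mul u u) w) w : ℝ) := by
      intro w
      rw [J.mul_comm (J.mul u u) w, J.inner_assoc]
      exact J.sq_inner_nonneg u w
    have h1 : (inner ℝ (J.mul (J.mul u u) v) v : ℝ) = 0 := by
      rw [J.mul_comm (J.mul u u) v, J.inner_assoc]
      exact h
    have hxv : J.mul (J.mul u u) v = 0 := J.psd_kernel _ _ hpsd h1
    have h2 : (inner ℝ (J.mul (J.mul u u) (J.mul v v)) (J.mul v v) : ℝ) = 0 := by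
      rw [J.mul_comm (J.mul u u) (J.mul v v), J.inner_assoc, ← J.jordan v v,
        ← J.inner_assoc, J.mul_comm v (J.mul u u), hxv]
      simp
    exact J.psd_kernel _ _ hpsd h2
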